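/- Let s, t be coprime integers greater than 1. The set of (s,t)-minimal partitions is preserved by the action of W_s × W_t on partitions: if λ is (s,t)-minimal and w ∈ W_s × W_t, then wλ is (s,t)-minimal. Consequently, for u ∈ W_s and v ∈ W_t, the minimal size satisfies m_{uσ, vτ} = m_{σ,τ} − |σ| − |τ| + |uσ| + |vτ|. -/

import Mathlib

/-- A partition, given as a weakly decreasing finitely-supported sequence of
natural numbers (`parts 0` is the first part). -/
structure SeqPartition where
  parts : ℕ →₀ ℕ
  antitone : ∀ ⦃i j : ℕ⦄, i ≤ j → parts j ≤ parts i

namespace SeqPartition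

/-- The size `|λ|` of a partition. -/
def size (l : SeqPartition) : ℕ := l.parts.sum fun _ v => v

/-- The beta-set `β(λ) = { λ_r − r : r ≥ 1 }` (here 0-indexed). -/
def betaSet (l : SeqPartition) : Set ℤ :=
  Set.range fun r : ℕ => (l.parts r : ℤ) - (r + 1)

/-- `RemoveHook h l m` : `m` is obtained from `l` by removing a rim `h`-hook;
in beta-set terms, an element `b` of `β(l)` is replaced by `b − h ∉ β(l)`. -/
def RemoveHook (h : ℕ) (l m : SeqPartition) : Prop :=
  ∃ b : ℤ, b ∈ l.betaSet ∧ b - (h : ℤ) ∉ l.betaSet ∧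
    m.betaSet = insert (b - (h : ℤ)) (l.betaSet \ {b})

/-- `l` is an `s`-core: no rim `s`-hook can be removed. -/
def IsCore (s : ℕ) (l : SeqPartition) : Prop := ∀ m : SeqPartition, ¬ RemoveHook s l m

/-- `c` is the `s`-core of `l`: it is obtained from `l` by repeatedly removing
rim `s`-hooks, and is itself an `s`-core. -/
def HasCore (s : ℕ) (l c : SeqPartition) : Prop :=
  Relation.ReflTransGen (RemoveHook s) l c ∧ IsCore s c

/-- `IsConj l m` : `m` is the conjugate partition of `l`. -/
def IsConj (l m : SeqPartition) : Prop :=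
  ∀ r : ℕ, m.parts r = Set.ncard {c : ℕ | r + 1 ≤ l.parts c}

end SeqPartition

/-- The region `U_x = { x + as + bt : a, b > 0 }`. -/
def UpSet (s t : ℕ) (x : ℤ) : Set ℤ :=
  {n : ℤ | ∃ a b : ℕ, 0 < a ∧ 0 < b ∧ n = x + (a : ℤ) * s + (b : ℤ) * t}

/-- The region `L_x = { x − as − bt : a, b ≥ 0 }`. -/
def LowSet (s t : ℕ) (x : ℤ) : Set ℤ :=
  {n : ℤ | ∃ a b : ℕ, n = x - (a : ℤ) * s - (b : ℤ) * t}

/-- `x` is a pinch-point for `l` : `L_x ⊆ β(l)` and `β(l) ∩ U_x = ∅`. -/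
def PinchPoint (s t : ℕ) (x : ℤ) (l : SeqPartition) : Prop :=
  LowSet s t x ⊆ l.betaSet ∧ l.betaSet ∩ UpSet s t x = ∅

/-- The generator `w_i` of the affine symmetric group `W_s` in its level-`t`
action on `ℤ` : `n ↦ n + t` if `n ≡ (i−1)t − (s−1)(t−1)/2 (mod s)`,
`n ↦ n − t` if `n ≡ it − (s−1)(t−1)/2 (mod s)`, and `n ↦ n` otherwise. -/
def wgen (s t : ℕ) (i : ℤ) : ℤ → ℤ := fun n =>
  if (s : ℤ) ∣ (n + ((s : ℤ) - 1) * ((t : ℤ) - 1) / 2 - (i - 1) * t) then n + t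
  else if (s : ℤ) ∣ (n + ((s : ℤ) - 1) * ((t : ℤ) - 1) / 2 - i * t) then n - t
  else n

/-- The monoid of maps `ℤ → ℤ` generated by the `wgen s t i`.  Since each
generator is an involution, this is the image of the level-`t` action
of the affine symmetric group `W_s` on `ℤ`. -/
def WMon (s t : ℕ) : Submonoid (Function.End ℤ) :=
  Submonoid.closure {f | ∃ i : ℤ, f = wgen s t i}

/-- `l` is `(s,t)`-minimal: no partition of smaller size has the same
`s`-core and `t`-core. -/
def MinimalPart (s t : ℕ) (l : SeqPartition) : Prop :=
  ∀ (m σ τ : SeqPartition), SeqPartition.HasCore s l σ → SeqPartition.HasCore t l τ →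
    SeqPartition.HasCore s m σ → SeqPartition.HasCore t m τ → l.size ≤ m.size

open scoped Classical

namespace StProof

noncomputable def win (S : Set ℤ) (N : ℕ) : Finset ℤ :=
  (Finset.Icc (-(N:ℤ)) N).filter (· ∈ S)

noncomputable def wsumf (S : Set ℤ) (N : ℕ) (φ : ℤ → ℤ) : ℤ := (win S N).sum φ

def ind (m : ℕ) (c : ℤ) : ℤ → ℤ := fun x => if (m:ℤ) ∣ x - c then 1 else 0

/-- `S` contains all integers below `-M` and is bounded above by `M`. -/
def Adm (S : Set ℤ) (M : ℕ) : Prop :=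
  (∀ x : ℤ, x < -(M:ℤ) → x ∈ S) ∧ ∀ x ∈ S, x ≤ (M:ℤ)

lemma mem_win {S : Set ℤ} {N : ℕ} {x : ℤ} :
    x ∈ win S N ↔ (-(N:ℤ) ≤ x ∧ x ≤ N) ∧ x ∈ S := by
  simp only [win, Finset.mem_filter, Finset.mem_Icc]

/-- The key window lemma: for an involution `g` of displacement at most `C`,
the `φ`-sum over a window of `g '' S` equals the `φ∘g`-sum over the window of
`S` plus a boundary correction not depending on `S`. -/
lemma key (g : ℤ → ℤ) (hg : ∀ x, g (g x) = x) (C : ℕ) (hC : ∀ x, |g x - x| ≤ (C:ℤ))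
    (S : Set ℤ) (M : ℕ) (hS : Adm S M) (N : ℕ) (hN : M + C ≤ N) (φ : ℤ → ℤ) :
    wsumf (g '' S) N φ = wsumf S N (fun y => φ (g y)) +
      ((Finset.Icc (-(N:ℤ)) N).filter (fun x => g x < -(N:ℤ))).sum
        (fun x => φ x - φ (g x)) := by
  have gmem : ∀ x, x ∈ g '' S ↔ g x ∈ S := by
    intro x
    constructor
    · rintro ⟨y, hy, rfl⟩; rwa [hg]
    · intro h; exact ⟨g x, h, hg x⟩
  have hMN : (M:ℤ) + C ≤ N := by exact_mod_cast hN
  have hbd : ∀ x, x - C ≤ g x ∧ g x ≤ x + C := by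
    intro x
    have := abs_le.1 (hC x); constructor <;> linarith [this.1, this.2]
  set W : Finset ℤ := Finset.Icc (-(N:ℤ)) N with hW
  have hwin : win (g '' S) N = W.filter (fun x => g x ∈ S) := by
    apply Finset.ext; intro x
    simp only [win, Finset.mem_filter, hW, gmem]
  -- split the lhs by whether g x ∈ W
  have hsplit : (W.filter (fun x => g x ∈ S)).sum φ =
      ((W.filter (fun x => g x ∈ S)).filter (fun x => -(N:ℤ) ≤ g x)).sum φ +
      ((W.filter (fun x => g x ∈ S)).filter (fun x => ¬ -(N:ℤ) ≤ g x)).sum φ :=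
    (Finset.sum_filter_add_sum_filter_not _ _ _).symm
  -- piece 2 equals the boundary set Bd
  set Bd : Finset ℤ := W.filter (fun x => g x < -(N:ℤ)) with hBd
  have hp2 : (W.filter (fun x => g x ∈ S)).filter (fun x => ¬ -(N:ℤ) ≤ g x) = Bd := by
    apply Finset.ext; intro x
    simp only [Finset.mem_filter, hBd, not_le]
    constructor
    · rintro ⟨⟨h1, _⟩, h3⟩; exact ⟨h1, h3⟩
    · rintro ⟨h1, h3⟩
      refine ⟨⟨h1, hS.1 _ ?_⟩, h3⟩
      linarith
  -- piece 1 is in bijection with the part of win S N that stays in the window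
  have hp1 : ((W.filter (fun x => g x ∈ S)).filter (fun x => -(N:ℤ) ≤ g x)).sum φ =
      ((win S N).filter (fun y => -(N:ℤ) ≤ g y)).sum (fun y => φ (g y)) := by
    apply Finset.sum_nbij' (i := g) (j := g)
    · intro a ha
      simp only [Finset.mem_filter, hW, Finset.mem_Icc] at ha
      obtain ⟨⟨⟨ha1, ha2⟩, ha3⟩, ha4⟩ := ha
      have hga : g a ≤ (M:ℤ) := hS.2 _ ha3
      simp only [Finset.mem_filter, mem_win, hg]
      refine ⟨⟨⟨ha4, by linarith⟩, ha3⟩, by linarith⟩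
    · intro a ha
      simp only [Finset.mem_filter, mem_win] at ha
      obtain ⟨⟨⟨ha1, ha2⟩, ha3⟩, ha4⟩ := ha
      have : g a ≤ (N:ℤ) := by
        have := (hbd a).2
        have haM : a ≤ (M:ℤ) := hS.2 _ ha3
        linarith
      simp only [Finset.mem_filter, hW, Finset.mem_Icc, hg]
      exact ⟨⟨⟨ha4, this⟩, ha3⟩, ha1⟩
    · intro a _; exact hg a
    · intro a _; exact hg a
    · intro a _; rw [hg]
  -- sum over win S N of φ∘g splits likewise
  have hsplit2 : (win S N).sum (fun y => φ (g y)) =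
      ((win S N).filter (fun y => -(N:ℤ) ≤ g y)).sum (fun y => φ (g y)) +
      ((win S N).filter (fun y => ¬ -(N:ℤ) ≤ g y)).sum (fun y => φ (g y)) :=
    (Finset.sum_filter_add_sum_filter_not _ _ _).symm
  have hp3 : (win S N).filter (fun y => ¬ -(N:ℤ) ≤ g y) = Bd := by
    apply Finset.ext; intro x
    simp only [Finset.mem_filter, mem_win, hBd, not_le, hW, Finset.mem_Icc]
    constructor
    · rintro ⟨⟨⟨h1, h2⟩, _⟩, h4⟩; exact ⟨⟨h1, h2⟩, h4⟩
    · rintro ⟨⟨h1, h2⟩, h4⟩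
      have hx : x ∈ S := by
        apply hS.1
        have := (hbd x).1
        linarith
      exact ⟨⟨⟨h1, h2⟩, hx⟩, h4⟩
  calc wsumf (g '' S) N φ = (W.filter (fun x => g x ∈ S)).sum φ := by
        rw [wsumf, hwin]
    _ = ((win S N).filter (fun y => -(N:ℤ) ≤ g y)).sum (fun y => φ (g y)) + Bd.sum φ := by
        rw [hsplit, hp1, hp2]
    _ = ((win S N).sum (fun y => φ (g y)) - Bd.sum (fun y => φ (g y))) + Bd.sum φ := by
        rw [hsplit2, hp3]; ring
    _ = _ := by rw [wsumf]; rw [Finset.sum_sub_distrib]; ring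

end StProof
namespace StProof

/-- Normal form of the generators: `n ↦ n+t` on class `a₀` mod `s`,
`n ↦ n−t` on class `a₀+t`, identity elsewhere. -/
def tg (s t : ℕ) (a₀ : ℤ) : ℤ → ℤ := fun n =>
  if (s:ℤ) ∣ n - a₀ then n + t else if (s:ℤ) ∣ n - (a₀ + t) then n - t else n

/-- The induced map on classes mod `s`. -/
def hsh (s t : ℕ) (a₀ : ℤ) (c : ℤ) : ℤ :=
  if (s:ℤ) ∣ c - (a₀ + t) then c - t else if (s:ℤ) ∣ c - a₀ then c + t else c

lemma dvd_sub_congr {d x y c : ℤ} (h : d ∣ x - y) : d ∣ x - c ↔ d ∣ y - c := by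
  constructor <;> intro H
  · have hyc : y - c = (x - c) - (x - y) := by ring
    rw [hyc]; exact dvd_sub H h
  · have hxc : x - c = (y - c) + (x - y) := by ring
    rw [hxc]; exact dvd_add H h

lemma wgen_eq_tg (s t : ℕ) (i : ℤ) :
    wgen s t i = tg s t ((i-1)*t - ((s:ℤ)-1)*((t:ℤ)-1)/2) := by
  funext n
  set d := ((s:ℤ)-1)*((t:ℤ)-1)/2 with hd
  show (if (s : ℤ) ∣ (n + d - (i - 1) * t) then n + t
    else if (s : ℤ) ∣ (n + d - i * t) then n - t else n) = _
  unfold tg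
  have h1 : n + d - (i-1)*t = n - ((i-1)*t - d) := by ring
  have h2 : n + d - i*t = n - (((i-1)*t - d) + t) := by ring
  rw [h1, h2]

section Gen

variable {s t : ℕ} {a₀ : ℤ}

lemma tg_invol (hst : ¬ (s:ℤ) ∣ (t:ℤ)) (n : ℤ) : tg s t a₀ (tg s t a₀ n) = n := by
  unfold tg
  by_cases hA : (s:ℤ) ∣ n - a₀
  · rw [if_pos hA]
    have hnA : ¬ (s:ℤ) ∣ n + t - a₀ := by
      intro h
      have ht : (t:ℤ) = (n + t - a₀) - (n - a₀) := by ring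
      exact hst (ht ▸ dvd_sub h hA)
    have hB : (s:ℤ) ∣ n + t - (a₀ + t) := by
      have he : n + (t:ℤ) - (a₀ + t) = n - a₀ := by ring
      rw [he]; exact hA
    rw [if_neg hnA, if_pos hB]; ring
  · rw [if_neg hA]
    by_cases hB : (s:ℤ) ∣ n - (a₀ + t)
    · rw [if_pos hB]
      have hA' : (s:ℤ) ∣ n - t - a₀ := by
        have he : n - (t:ℤ) - a₀ = n - (a₀ + t) := by ring
        rw [he]; exact hB
      rw [if_pos hA']; ring
    · rw [if_neg hB, if_neg hA, if_neg hB]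

lemma tg_tdvd (n : ℤ) : (t:ℤ) ∣ tg s t a₀ n - n := by
  unfold tg; split_ifs
  · simp
  · have he : n - (t:ℤ) - n = -t := by ring
    rw [he]; exact dvd_neg.2 dvd_rfl
  · simp

lemma tg_bound (n : ℤ) : |tg s t a₀ n - n| ≤ (t:ℤ) := by
  unfold tg; split_ifs
  · have he : n + (t:ℤ) - n = t := by ring
    rw [he, abs_of_nonneg (by positivity)]
  · have he : n - (t:ℤ) - n = -t := by ring
    rw [he, abs_neg, abs_of_nonneg (by positivity)]
  · simp

lemma tg_shift (n : ℤ) : tg s t a₀ (n + s) = tg s t a₀ n + s := by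
  have hkey : ∀ c : ℤ, ((s:ℤ) ∣ n + s - c) ↔ (s:ℤ) ∣ n - c := by
    intro c
    exact dvd_sub_congr (by simpa using (dvd_refl (s:ℤ)))
  unfold tg
  simp only [hkey]
  split_ifs <;> ring

lemma tg_ind_t (c n : ℤ) : ind t c (tg s t a₀ n) = ind t c n := by
  unfold ind
  congr 1
  simp only [eq_iff_iff]
  exact dvd_sub_congr (tg_tdvd n)

lemma tg_ind_s (hst : ¬ (s:ℤ) ∣ (t:ℤ)) (c n : ℤ) :
    ind s c (tg s t a₀ n) = ind s (hsh s t a₀ c) n := by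
  unfold ind
  congr 1
  simp only [eq_iff_iff]
  unfold tg hsh
  by_cases hA : (s:ℤ) ∣ n - a₀
  · rw [if_pos hA]
    by_cases hcB : (s:ℤ) ∣ c - (a₀ + t)
    · rw [if_pos hcB]
      have he : n + (t:ℤ) - c = n - (c - t) := by ring
      rw [he]
    · rw [if_neg hcB]
      by_cases hcA : (s:ℤ) ∣ c - a₀
      · rw [if_pos hcA]
        constructor <;> intro h <;> exfalso <;> apply hst
        · have ht : (t:ℤ) = (n + t - c) - (n - a₀) + (c - a₀) := by ring
          rw [ht]; exact dvd_add (dvd_sub h hA) hcA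
        · have ht : (t:ℤ) = (n - a₀) - (n - (c + t)) - (c - a₀) := by ring
          rw [ht]; exact dvd_sub (dvd_sub hA h) hcA
      · rw [if_neg hcA]
        constructor <;> intro h <;> exfalso
        · apply hcB
          have he : c - (a₀ + t) = (n - a₀) - (n + t - c) := by ring
          rw [he]; exact dvd_sub hA h
        · apply hcA
          have he : c - a₀ = (n - a₀) - (n - c) := by ring
          rw [he]; exact dvd_sub hA h
  · rw [if_neg hA]
    by_cases hB : (s:ℤ) ∣ n - (a₀ + t)
    · rw [if_pos hB]
      by_cases hcB : (s:ℤ) ∣ c - (a₀ + t)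
      · rw [if_pos hcB]
        constructor <;> intro h <;> exfalso <;> apply hst
        · have ht : (t:ℤ) = (n - (a₀ + t)) - (n - t - c) - (c - (a₀ + t)) := by ring
          rw [ht]; exact dvd_sub (dvd_sub hB h) hcB
        · have ht : (t:ℤ) = (n - (c - t)) - (n - (a₀ + t)) + (c - (a₀ + t)) := by ring
          rw [ht]; exact dvd_add (dvd_sub h hB) hcB
      · rw [if_neg hcB]
        by_cases hcA : (s:ℤ) ∣ c - a₀
        · rw [if_pos hcA]
          have he : n - (t:ℤ) - c = n - (c + t) := by ring
          rw [he]
        · rw [if_neg hcA]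
          constructor <;> intro h <;> exfalso
          · apply hcA
            have he : c - a₀ = (n - (a₀ + t)) - (n - t - c) := by ring
            rw [he]; exact dvd_sub hB h
          · apply hcB
            have he : c - (a₀ + t) = (n - (a₀ + t)) - (n - c) := by ring
            rw [he]; exact dvd_sub hB h
    · rw [if_neg hB]
      by_cases hcB : (s:ℤ) ∣ c - (a₀ + t)
      · rw [if_pos hcB]
        constructor <;> intro h <;> exfalso
        · apply hB
          have he : n - (a₀ + t) = (n - c) + (c - (a₀ + t)) := by ring
          rw [he]; exact dvd_add h hcB
        · apply hA
          have he : n - a₀ = (n - (c - t)) + (c - (a₀ + t)) := by ring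
          rw [he]; exact dvd_add h hcB
      · rw [if_neg hcB]
        by_cases hcA : (s:ℤ) ∣ c - a₀
        · rw [if_pos hcA]
          constructor <;> intro h <;> exfalso
          · apply hA
            have he : n - a₀ = (n - c) + (c - a₀) := by ring
            rw [he]; exact dvd_add h hcA
          · apply hB
            have he : n - (a₀ + t) = (n - (c + t)) + (c - a₀) := by ring
            rw [he]; exact dvd_add h hcA
        · rw [if_neg hcA]

lemma tg_id_eq (hst : ¬ (s:ℤ) ∣ (t:ℤ)) (n : ℤ) :
    tg s t a₀ n = n + (t:ℤ) * ind s a₀ n - (t:ℤ) * ind s (a₀ + t) n := by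
  unfold tg ind
  by_cases hA : (s:ℤ) ∣ n - a₀
  · have hnB : ¬ (s:ℤ) ∣ n - (a₀ + t) := by
      intro h
      apply hst
      have ht : (t:ℤ) = (n - a₀) - (n - (a₀ + t)) := by ring
      rw [ht]; exact dvd_sub hA h
    rw [if_pos hA, if_pos hA, if_neg hnB]; ring
  · rw [if_neg hA, if_neg hA]
    by_cases hB : (s:ℤ) ∣ n - (a₀ + t)
    · rw [if_pos hB, if_pos hB]; ring
    · rw [if_neg hB, if_neg hB]; ring

end Gen

end StProof
namespace StProof

/-- All the structure preserved by elements of the level-`t` action of `W_s`. -/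
def GoodMap (s t : ℕ) (u : ℤ → ℤ) : Prop :=
  Function.Bijective u ∧
  (∃ C : ℕ, ∀ n, |u n - n| ≤ (C:ℤ)) ∧
  (∀ n, (t:ℤ) ∣ u n - n) ∧
  (∀ n, u (n + s) = u n + s) ∧
  (∀ S M, Adm S M → ∀ᶠ N in Filter.atTop, (∀ c : ℤ,
      wsumf (u '' S) N (ind t c) = wsumf S N (ind t c)) ∧
      wsumf (u '' S) N (fun _ => 1) = wsumf S N (fun _ => 1)) ∧
  (∀ S T MS MT, Adm S MS → Adm T MT →
    (∀ᶠ N in Filter.atTop, ∀ c : ℤ, wsumf S N (ind s c) = wsumf T N (ind s c)) →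
    ∀ᶠ N in Filter.atTop, (∀ c : ℤ, wsumf (u '' S) N (ind s c) = wsumf (u '' T) N (ind s c)) ∧
      wsumf (u '' S) N id - wsumf S N id = wsumf (u '' T) N id - wsumf T N id)

lemma Adm_image {u : ℤ → ℤ} {C : ℕ} (hb : Function.Bijective u)
    (hC : ∀ n, |u n - n| ≤ (C:ℤ)) {S : Set ℤ} {M : ℕ} (hS : Adm S M) :
    Adm (u '' S) (M + C) := by
  constructor
  · intro x hx
    obtain ⟨y, hy⟩ := hb.2 x
    have h1 := abs_le.1 (hC y)
    have hyS : y ∈ S := by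
      apply hS.1
      rw [hy] at h1
      push_cast at hx ⊢
      linarith [h1.1]
    exact ⟨y, hyS, hy⟩
  · rintro x ⟨y, hy, rfl⟩
    have h1 := abs_le.1 (hC y)
    have := hS.2 y hy
    push_cast
    linarith [h1.2]

lemma goodMap_tg {s t : ℕ} (a₀ : ℤ) (hst : ¬ (s:ℤ) ∣ (t:ℤ)) :
    GoodMap s t (tg s t a₀) := by
  have hinv : Function.Involutive (tg s t a₀) := fun n => tg_invol hst n
  refine ⟨hinv.bijective, ⟨t, fun n => tg_bound n⟩, fun n => tg_tdvd n,
    fun n => tg_shift n, ?_, ?_⟩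
  · intro S M hS
    rw [Filter.eventually_atTop]
    refine ⟨M + t, fun N hN => ?_⟩
    constructor
    · intro c
      rw [key (tg s t a₀) hinv t (fun n => tg_bound n) S M hS N hN (ind t c)]
      have h1 : ∀ y, ind t c (tg s t a₀ y) = ind t c y := fun y => tg_ind_t c y
      have h2 : wsumf S N (fun y => ind t c (tg s t a₀ y)) = wsumf S N (ind t c) := by
        unfold wsumf; exact Finset.sum_congr rfl (fun y _ => h1 y)
      rw [h2]
      have h3 : ∀ x ∈ (Finset.Icc (-(N:ℤ)) N).filter (fun x => tg s t a₀ x < -(N:ℤ)),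
          ind t c x - ind t c (tg s t a₀ x) = 0 := by
        intro x _; rw [h1 x]; ring
      rw [Finset.sum_congr rfl h3, Finset.sum_const, smul_zero, add_zero]
    · rw [key (tg s t a₀) hinv t (fun n => tg_bound n) S M hS N hN (fun _ => 1)]
      simp [wsumf]
  · intro S T MS MT hAS hAT hev
    rw [Filter.eventually_atTop] at hev ⊢
    obtain ⟨N₀, hN₀⟩ := hev
    refine ⟨max (max (MS + t) (MT + t)) N₀, fun N hN => ?_⟩
    have hNS : MS + t ≤ N := le_trans (le_trans (le_max_left _ _) (le_max_left _ _)) hN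
    have hNT : MT + t ≤ N := le_trans (le_trans (le_max_right _ _) (le_max_left _ _)) hN
    have hNc : ∀ c : ℤ, wsumf S N (ind s c) = wsumf T N (ind s c) :=
      hN₀ N (le_trans (le_max_right _ _) hN)
    have keyS := fun φ => key (tg s t a₀) hinv t (fun n => tg_bound n) S MS hAS N hNS φ
    have keyT := fun φ => key (tg s t a₀) hinv t (fun n => tg_bound n) T MT hAT N hNT φ
    constructor
    · intro c
      rw [keyS (ind s c), keyT (ind s c)]
      have hS2 : wsumf S N (fun y => ind s c (tg s t a₀ y)) =
          wsumf S N (ind s (hsh s t a₀ c)) :=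
        Finset.sum_congr rfl (fun y _ => tg_ind_s hst c y)
      have hT2 : wsumf T N (fun y => ind s c (tg s t a₀ y)) =
          wsumf T N (ind s (hsh s t a₀ c)) :=
        Finset.sum_congr rfl (fun y _ => tg_ind_s hst c y)
      rw [hS2, hT2, hNc (hsh s t a₀ c)]
    · rw [keyS id, keyT id]
      have hsum : ∀ (U : Set ℤ), wsumf U N (fun y => id (tg s t a₀ y)) =
          wsumf U N id + (t:ℤ) * wsumf U N (ind s a₀) - (t:ℤ) * wsumf U N (ind s (a₀ + t)) := by
        intro U
        unfold wsumf
        have e : ∀ y ∈ win U N, id (tg s t a₀ y) =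
            id y + ((t:ℤ) * ind s a₀ y - (t:ℤ) * ind s (a₀ + t) y) := by
          intro y _
          simp only [id_eq]
          rw [tg_id_eq (a₀ := a₀) hst y]; ring
        rw [Finset.sum_congr rfl e, Finset.sum_add_distrib, Finset.sum_sub_distrib,
          ← Finset.mul_sum, ← Finset.mul_sum]
        ring
      rw [hsum S, hsum T, hNc a₀, hNc (a₀ + t)]
      ring

lemma goodMap_one (s t : ℕ) : GoodMap s t (fun n => n) := by
  refine ⟨Function.bijective_id, ⟨0, by simp⟩, by simp, by simp, ?_, ?_⟩
  · intro S M hS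
    simp [Set.image_id']
  · intro S T MS MT _ _ hev
    filter_upwards [hev] with N hN
    refine ⟨fun c => by simpa [Set.image_id'] using hN c, by simp [Set.image_id']⟩

lemma goodMap_comp {s t : ℕ} {u₁ u₂ : ℤ → ℤ} (h1 : GoodMap s t u₁) (h2 : GoodMap s t u₂) :
    GoodMap s t (fun n => u₁ (u₂ n)) := by
  obtain ⟨hb1, ⟨C1, hC1⟩, ht1, hs1, hw1, hr1⟩ := h1
  obtain ⟨hb2, ⟨C2, hC2⟩, ht2, hs2, hw2, hr2⟩ := h2
  have himg : ∀ S : Set ℤ, (fun n => u₁ (u₂ n)) '' S = u₁ '' (u₂ '' S) := by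
    intro S; rw [Set.image_image]
  refine ⟨hb1.comp hb2, ⟨C1 + C2, fun n => ?_⟩, fun n => ?_, fun n => ?_, ?_, ?_⟩
  · have e : u₁ (u₂ n) - n = (u₁ (u₂ n) - u₂ n) + (u₂ n - n) := by ring
    rw [e]
    push_cast
    exact le_trans (abs_add_le _ _) (add_le_add (hC1 _) (hC2 _))
  · have e : u₁ (u₂ n) - n = (u₁ (u₂ n) - u₂ n) + (u₂ n - n) := by ring
    rw [e]; exact dvd_add (ht1 _) (ht2 _)
  · show u₁ (u₂ (n + s)) = u₁ (u₂ n) + s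
    rw [hs2, hs1]
  · intro S M hS
    have hS2 : Adm (u₂ '' S) (M + C2) := Adm_image hb2 hC2 hS
    filter_upwards [hw2 S M hS, hw1 (u₂ '' S) (M + C2) hS2] with N hN2 hN1
    rw [himg]
    exact ⟨fun c => (hN1.1 c).trans (hN2.1 c), hN1.2.trans hN2.2⟩
  · intro S T MS MT hAS hAT hev
    have hAS2 : Adm (u₂ '' S) (MS + C2) := Adm_image hb2 hC2 hAS
    have hAT2 : Adm (u₂ '' T) (MT + C2) := Adm_image hb2 hC2 hAT
    have hev2 := hr2 S T MS MT hAS hAT hev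
    have hev2' : ∀ᶠ N in Filter.atTop, ∀ c : ℤ,
        wsumf (u₂ '' S) N (ind s c) = wsumf (u₂ '' T) N (ind s c) :=
      hev2.mono (fun N hN => hN.1)
    have hev1 := hr1 (u₂ '' S) (u₂ '' T) (MS + C2) (MT + C2) hAS2 hAT2 hev2'
    filter_upwards [hev1, hev2] with N hN1 hN2
    rw [himg, himg]
    refine ⟨hN1.1, ?_⟩
    have e1 := hN1.2
    have e2 := hN2.2
    linarith

lemma goodMap_of_mem {s t : ℕ} (hst : ¬ (s:ℤ) ∣ (t:ℤ)) {u : Function.End ℤ}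
    (hu : u ∈ WMon s t) : GoodMap s t u := by
  induction hu using Submonoid.closure_induction with
  | mem x hx =>
      obtain ⟨i, rfl⟩ := hx
      rw [wgen_eq_tg]
      exact goodMap_tg _ hst
  | one => exact goodMap_one s t
  | mul x y hx hy ihx ihy =>
      have h := goodMap_comp (s := s) (t := t) ihx ihy
      exact h

lemma exists_inverse {s t : ℕ} {u : Function.End ℤ} (hst : ¬ (s:ℤ) ∣ (t:ℤ))
    (hu : u ∈ WMon s t) :
    ∃ u' : Function.End ℤ, u' ∈ WMon s t ∧ (∀ n, u' (u n) = n) ∧ ∀ n, u (u' n) = n := by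
  induction hu using Submonoid.closure_induction with
  | mem x hx =>
      obtain ⟨i, hi⟩ := hx
      refine ⟨x, Submonoid.subset_closure ⟨i, hi⟩, ?_, ?_⟩ <;>
        · intro n
          have : x = tg s t ((i-1)*t - ((s:ℤ)-1)*((t:ℤ)-1)/2) := by rw [hi, wgen_eq_tg]
          rw [this]
          exact tg_invol hst n
  | one => exact ⟨1, Submonoid.one_mem _, fun n => rfl, fun n => rfl⟩
  | mul x y hx hy ihx ihy =>
      obtain ⟨x', hx', hx1, hx2⟩ := ihx
      obtain ⟨y', hy', hy1, hy2⟩ := ihy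
      refine ⟨y' * x', Submonoid.mul_mem _ hy' hx', fun n => ?_, fun n => ?_⟩
      · show y' (x' ((x * y) n)) = n
        have : (x * y) n = x (y n) := rfl
        rw [this, hx1, hy1]
      · show (x * y) (y' (x' n)) = n
        have : (x * y) (y' (x' n)) = x (y (y' (x' n))) := rfl
        rw [this, hy2, hx2]

end StProof
namespace StProof

/-- The enumeration of the beta-set of a partition. -/
def pe (l : SeqPartition) : ℕ → ℤ := fun r => (l.parts r : ℤ) - (r + 1)

lemma betaSet_eq_range (l : SeqPartition) : l.betaSet = Set.range (pe l) := rfl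

lemma pe_strictAnti (l : SeqPartition) : StrictAnti (pe l) := by
  apply strictAnti_nat_of_succ_lt
  intro n
  have h := l.antitone (Nat.le_succ n)
  simp only [Nat.succ_eq_add_one] at h
  unfold pe
  push_cast
  omega

/-- A bound beyond which all parts vanish. -/
def pR (l : SeqPartition) : ℕ := l.parts.support.sup id + 1

lemma parts_eq_zero {l : SeqPartition} {r : ℕ} (h : pR l ≤ r) : l.parts r = 0 := by
  by_contra hne
  have hmem : r ∈ l.parts.support := Finsupp.mem_support_iff.2 hne
  have := Finset.le_sup (f := id) hmem
  simp only [id] at this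
  unfold pR at h
  omega

/-- The admissibility bound of a partition. -/
def pM (l : SeqPartition) : ℕ := pR l + l.parts 0

lemma adm_betaSet (l : SeqPartition) : Adm l.betaSet (pM l) := by
  constructor
  · intro x hx
    have hnn : (0:ℤ) ≤ -x - 1 := by
      have : (0:ℤ) ≤ (pM l : ℤ) := Int.natCast_nonneg _
      omega
    set r : ℕ := (-x - 1).toNat with hrdef
    have hc : (r : ℤ) = -x - 1 := Int.toNat_of_nonneg hnn
    have hrR : pR l ≤ r := by
      have h1 : (pR l : ℤ) ≤ (pM l : ℤ) := by
        have hh : pR l ≤ pM l := Nat.le_add_right _ _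
        exact_mod_cast hh
      have h2 : (pM l : ℤ) ≤ (r:ℤ) := by omega
      exact_mod_cast le_trans h1 h2
    refine ⟨r, ?_⟩
    show (l.parts r : ℤ) - (r + 1) = x
    rw [parts_eq_zero hrR]
    push_cast
    omega
  · rintro x ⟨r, rfl⟩
    show (l.parts r : ℤ) - (r + 1) ≤ (pM l : ℤ)
    have h1 : l.parts r ≤ l.parts 0 := l.antitone (Nat.zero_le r)
    have h2 : l.parts 0 ≤ pM l := by unfold pM; omega
    push_cast
    omega

lemma win_betaSet {l : SeqPartition} {N : ℕ} (hN : pM l ≤ N) :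
    win l.betaSet N = (Finset.range N).image (pe l) := by
  apply Finset.ext
  intro x
  rw [mem_win, Finset.mem_image]
  constructor
  · rintro ⟨⟨h1, h2⟩, r, rfl⟩
    refine ⟨r, Finset.mem_range.2 ?_, rfl⟩
    by_contra hr
    push_neg at hr
    have hz : l.parts r = 0 := parts_eq_zero (by unfold pM at hN; omega)
    have h1' : -(N:ℤ) ≤ pe l r := h1
    have hzz : pe l r = -(r:ℤ) - 1 := by unfold pe; rw [hz]; push_cast; ring
    rw [hzz] at h1'
    have hNr : (N:ℤ) ≤ r := by exact_mod_cast hr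
    omega
  · rintro ⟨r, hr, rfl⟩
    rw [Finset.mem_range] at hr
    refine ⟨⟨?_, ?_⟩, ⟨r, rfl⟩⟩
    · show -(N:ℤ) ≤ (l.parts r : ℤ) - (r + 1)
      have : (r:ℤ) + 1 ≤ N := by exact_mod_cast hr
      have hp : (0:ℤ) ≤ l.parts r := by positivity
      omega
    · show (l.parts r : ℤ) - (r + 1) ≤ (N:ℤ)
      have h1 : l.parts r ≤ l.parts 0 := l.antitone (Nat.zero_le r)
      have h2 : l.parts 0 ≤ pM l := by unfold pM; omega
      have : (l.parts r : ℤ) ≤ pM l := by exact_mod_cast le_trans h1 h2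
      have : (pM l : ℤ) ≤ N := by exact_mod_cast hN
      omega

lemma card_win_betaSet {l : SeqPartition} {N : ℕ} (hN : pM l ≤ N) :
    wsumf l.betaSet N (fun _ => 1) = (N : ℤ) := by
  unfold wsumf
  rw [win_betaSet hN, Finset.sum_const, Finset.card_image_of_injective _ (pe_strictAnti l).injective,
    Finset.card_range]
  simp

/-- The "triangular" sum `∑_{r<N} (r+1)`. -/
def TT (N : ℕ) : ℤ := (Finset.range N).sum (fun r => (r:ℤ) + 1)

lemma size_eq_sum {l : SeqPartition} {N : ℕ} (hN : pR l ≤ N) :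
    (l.size : ℤ) = (Finset.range N).sum (fun r => (l.parts r : ℤ)) := by
  have hsub : l.parts.support ⊆ Finset.range N := by
    intro r hr
    rw [Finset.mem_range]
    have h2 := Finset.le_sup (f := id) hr
    simp only [id] at h2
    unfold pR at hN
    omega
  have hz : ∀ x ∈ Finset.range N, x ∉ l.parts.support → ((l.parts x : ℤ)) = 0 := by
    intro x _ hx
    rw [Finsupp.notMem_support_iff.1 hx]
    rfl
  have hss := Finset.sum_subset hsub hz
  unfold SeqPartition.size
  rw [Finsupp.sum]
  push_cast
  rw [← hss]

lemma wsum_betaSet {l : SeqPartition} {N : ℕ} (hN : pM l ≤ N) :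
    wsumf l.betaSet N id = (l.size : ℤ) - TT N := by
  unfold wsumf
  rw [win_betaSet hN, Finset.sum_image (by
    intro a _ b _ h
    exact (pe_strictAnti l).injective h)]
  have : ∀ r ∈ Finset.range N, id (pe l r) = (l.parts r : ℤ) - ((r:ℤ) + 1) := by
    intro r _; rfl
  rw [Finset.sum_congr rfl this, Finset.sum_sub_distrib]
  rw [← size_eq_sum (le_trans (by unfold pM; omega) hN)]
  rfl

lemma strictAnti_range_eq {f g : ℕ → ℤ} (hf : StrictAnti f) (hg : StrictAnti g)
    (h : Set.range f = Set.range g) : ∀ n, f n = g n := by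
  intro n
  induction n using Nat.strong_induction_on with
  | _ n ih =>
    have key : ∀ (f' g' : ℕ → ℤ), StrictAnti f' → StrictAnti g' →
        Set.range f' = Set.range g' → (∀ m, m < n → f' m = g' m) → f' n ≤ g' n := by
      intro f' g' hf' hg' h' ih'
      have : f' n ∈ Set.range g' := h' ▸ Set.mem_range_self n
      obtain ⟨m, hm⟩ := this
      rcases lt_or_ge m n with hmn | hmn
      · exfalso
        have h1 : f' m = g' m := ih' m hmn
        have h2 : f' n < f' m := hf' hmn
        omega
      · calc f' n = g' m := hm.symm
          _ ≤ g' n := hg'.antitone hmn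
    have h1 := key f g hf hg h ih
    have h2 := key g f hg hf h.symm (fun m hm => (ih m hm).symm)
    omega

lemma partition_ext {l m : SeqPartition} (h : l.betaSet = m.betaSet) : l = m := by
  have hpe : ∀ r, pe l r = pe m r :=
    strictAnti_range_eq (pe_strictAnti l) (pe_strictAnti m) h
  have hparts : l.parts = m.parts := by
    apply Finsupp.ext
    intro r
    have := hpe r
    unfold pe at this
    omega
  cases l; cases m
  simp only at hparts
  subst hparts
  rfl

lemma finset_enum {F : Finset ℤ} {n : ℕ} (h : F.card = n) :
    ∃ f : ℕ → ℤ, (∀ i j, i < j → j < n → f i < f j) ∧ (∀ i, i < n → f i ∈ F) ∧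
      (∀ x ∈ F, ∃ i, i < n ∧ f i = x) := by
  refine ⟨fun i => if h' : i < n then (F.orderIsoOfFin h ⟨i, h'⟩ : ℤ) else 0, ?_, ?_, ?_⟩
  · intro i j hij hj
    dsimp only
    rw [dif_pos (lt_trans hij hj), dif_pos hj]
    have hlt : (⟨i, lt_trans hij hj⟩ : Fin n) < ⟨j, hj⟩ := hij
    exact_mod_cast (F.orderIsoOfFin h).strictMono hlt
  · intro i hi
    dsimp only
    rw [dif_pos hi]
    exact (F.orderIsoOfFin h ⟨i, hi⟩).2
  · intro x hx
    obtain ⟨k, hk⟩ := (F.orderIsoOfFin h).surjective ⟨x, hx⟩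
    refine ⟨k.1, k.2, ?_⟩
    dsimp only
    rw [dif_pos k.2]
    rw [show (⟨k.1, k.2⟩ : Fin n) = k from rfl, hk]

lemma exists_partition {S : Set ℤ} {M : ℕ} (hS : Adm S M)
    {N : ℕ} (hMN : M + 1 ≤ N) (hcard : wsumf S N (fun _ => 1) = (N:ℤ)) :
    ∃ l : SeqPartition, l.betaSet = S := by
  have hFcard : (win S N).card = N := by
    unfold wsumf at hcard
    rw [Finset.sum_const, nsmul_eq_mul, mul_one] at hcard
    exact_mod_cast hcard
  obtain ⟨f, hmono, hmem, hsurj⟩ := finset_enum hFcard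
  have hwinIcc : ∀ x ∈ win S N, (-(N:ℤ) ≤ x ∧ x ≤ N) ∧ x ∈ S := fun x hx => mem_win.1 hx
  -- lower bound on f
  have hlb : ∀ k, k < N → -(N:ℤ) + k ≤ f k := by
    intro k
    induction k with
    | zero => intro h0; simpa using (hwinIcc _ (hmem 0 h0)).1.1
    | succ k ih =>
      intro hk
      have h1 := ih (lt_trans (Nat.lt_succ_self k) hk)
      have h2 := hmono k (k+1) (Nat.lt_succ_self k) hk
      push_cast
      push_cast at h1
      omega
  set e : ℕ → ℤ := fun r => if r < N then f (N - 1 - r) else -(r:ℤ) - 1 with he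
  have heN : ∀ r, N ≤ r → e r = -(r:ℤ) - 1 := by
    intro r hr
    simp only [he]
    rw [if_neg (by omega : ¬ r < N)]
  have heLT : ∀ r, r < N → e r = f (N - 1 - r) := by
    intro r hr
    simp only [he]
    rw [if_pos hr]
  have helb : ∀ r : ℕ, -(r:ℤ) - 1 ≤ e r := by
    intro r
    by_cases hr : r < N
    · rw [heLT r hr]
      have h1 := hlb (N - 1 - r) (by omega)
      have : ((N - 1 - r : ℕ) : ℤ) = (N:ℤ) - 1 - r := by push_cast; omega
      omega
    · rw [heN r (by omega)]
  have hesa : StrictAnti e := by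
    apply strictAnti_nat_of_succ_lt
    intro r
    by_cases h1 : r + 1 < N
    · rw [heLT _ h1, heLT _ (by omega)]
      exact hmono _ _ (by omega) (by omega)
    · by_cases h2 : r < N
      · rw [heN (r+1) (by omega), heLT _ h2]
        have := hlb (N - 1 - r) (by omega)
        have hc : ((N - 1 - r : ℕ) : ℤ) = (N:ℤ) - 1 - r := by push_cast; omega
        push_cast
        omega
      · rw [heN (r+1) (by omega), heN r (by omega)]
        push_cast
        omega
  -- the nonnegativity needed for toNat
  have hnn : ∀ r, (0:ℤ) ≤ e r + r + 1 := by intro r; have := helb r; omega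
  have hstep : ∀ i j : ℕ, i ≤ j → e j + (j:ℤ) ≤ e i + i := by
    intro i j hij
    induction j with
    | zero => have : i = 0 := by omega
              subst this; omega
    | succ j ihj =>
      rcases Nat.lt_or_ge i (j+1) with h | h
      · have h2 := ihj (by omega)
        have h3 : e (j+1) < e j := hesa (Nat.lt_succ_self j)
        push_cast
        push_cast at h2
        omega
      · have : i = j + 1 := by omega
        subst this; omega
  set pf : ℕ → ℕ := fun r => (e r + r + 1).toNat with hpf
  have hpfzero : ∀ r, r ∉ Finset.range N → pf r = 0 := by
    intro r hr
    rw [Finset.mem_range] at hr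
    rw [hpf]
    simp only
    rw [heN r (by omega)]
    have : -(r:ℤ) - 1 + r + 1 = 0 := by ring
    rw [this]
    rfl
  have hpf' : ∀ a, pf a ≠ 0 → a ∈ Finset.range N := by
    intro a ha
    by_contra h
    exact ha (hpfzero a h)
  have hpfval : ∀ r, (pf r : ℤ) = e r + r + 1 := by
    intro r
    rw [hpf]
    simp only
    rw [Int.toNat_of_nonneg (hnn r)]
  refine ⟨⟨Finsupp.onFinset (Finset.range N) pf hpf', ?_⟩, ?_⟩
  · intro i j hij
    simp only [Finsupp.onFinset_apply]
    apply Int.toNat_le_toNat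
    have := hstep i j hij
    omega
  · show Set.range (fun r : ℕ => ((Finsupp.onFinset (Finset.range N) pf hpf') r : ℤ) - (r + 1)) = S
    have hfun : ∀ r : ℕ, ((Finsupp.onFinset (Finset.range N) pf hpf') r : ℤ) - ((r:ℤ) + 1) = e r := by
      intro r
      simp only [Finsupp.onFinset_apply]
      rw [hpfval r]
      ring
    ext x
    simp only [Set.mem_range]
    constructor
    · rintro ⟨r, hr⟩
      rw [hfun r] at hr
      subst hr
      by_cases hrN : r < N
      · rw [heLT r hrN]
        exact (hwinIcc _ (hmem _ (by omega))).2
      · rw [heN r (by omega)]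
        apply hS.1
        have h1 : (M:ℤ) + 1 ≤ N := by exact_mod_cast hMN
        have h2 : (N:ℤ) ≤ r := by exact_mod_cast (by omega : N ≤ r)
        omega
    · intro hx
      by_cases hxN : -(N:ℤ) ≤ x
      · have hxw : x ∈ win S N := by
          rw [mem_win]
          have h1 := hS.2 x hx
          have h2 : (M:ℤ) ≤ N := by exact_mod_cast (by omega : M ≤ N)
          exact ⟨⟨hxN, by omega⟩, hx⟩
        obtain ⟨i, hi, hfi⟩ := hsurj x hxw
        refine ⟨N - 1 - i, ?_⟩
        rw [hfun, heLT _ (by omega)]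
        have : N - 1 - (N - 1 - i) = i := by omega
        rw [this, hfi]
      · refine ⟨(-x - 1).toNat, ?_⟩
        have hge : (0:ℤ) ≤ -x - 1 := by omega
        have hc : (((-x - 1).toNat : ℕ) : ℤ) = -x - 1 := Int.toNat_of_nonneg hge
        rw [hfun, heN _ ?_]
        · omega
        · have : (N:ℤ) ≤ ((-x-1).toNat : ℤ) := by omega
          exact_mod_cast this

end StProof
namespace StProof

lemma win_swap {S : Set ℤ} {b bn : ℤ} (hb : b ∈ S) (hbn : bn ∉ S) {N : ℕ}
    (h1 : -(N:ℤ) ≤ bn) (h2 : bn ≤ N) (h3 : -(N:ℤ) ≤ b) (h4 : b ≤ N) :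
    win (insert bn (S \ {b})) N = insert bn ((win S N).erase b) := by
  apply Finset.ext
  intro x
  rw [mem_win, Finset.mem_insert, Finset.mem_erase, mem_win]
  constructor
  · rintro ⟨hIcc, hx⟩
    rcases hx with rfl | ⟨hxS, hxb⟩
    · exact Or.inl rfl
    · exact Or.inr ⟨hxb, hIcc, hxS⟩
  · rintro (rfl | ⟨hxb, hIcc, hxS⟩)
    · exact ⟨⟨h1, h2⟩, Or.inl rfl⟩
    · exact ⟨hIcc, Or.inr ⟨hxS, hxb⟩⟩

lemma wsumf_swap {S : Set ℤ} {b bn : ℤ} (hb : b ∈ S) (hbn : bn ∉ S) {N : ℕ}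
    (h1 : -(N:ℤ) ≤ bn) (h2 : bn ≤ N) (h3 : -(N:ℤ) ≤ b) (h4 : b ≤ N) (φ : ℤ → ℤ) :
    wsumf (insert bn (S \ {b})) N φ = wsumf S N φ + φ bn - φ b := by
  unfold wsumf
  rw [win_swap hb hbn h1 h2 h3 h4]
  have hbwin : b ∈ win S N := mem_win.2 ⟨⟨h3, h4⟩, hb⟩
  have hbn' : bn ∉ (win S N).erase b := by
    intro hc
    exact hbn (mem_win.1 (Finset.mem_of_mem_erase hc)).2
  rw [Finset.sum_insert hbn', ← Finset.sum_erase_add (win S N) φ hbwin]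
  ring

lemma removeHook_wsumf {h : ℕ} {l m : SeqPartition} (hr : SeqPartition.RemoveHook h l m) :
    ∃ b : ℤ, ∀ᶠ N in Filter.atTop, ∀ φ : ℤ → ℤ,
      wsumf m.betaSet N φ = wsumf l.betaSet N φ + φ (b - (h:ℤ)) - φ b := by
  obtain ⟨b, hb, hbh, hm⟩ := hr
  refine ⟨b, ?_⟩
  rw [Filter.eventually_atTop]
  refine ⟨b.natAbs + h, fun N hN => fun φ => ?_⟩
  have hN' : (b.natAbs : ℤ) + h ≤ N := by exact_mod_cast hN
  have habs : |b| = (b.natAbs : ℤ) := Int.abs_eq_natAbs b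
  have hle := le_abs_self b
  have hge := neg_abs_le b
  have hs0 : (0:ℤ) ≤ (h:ℤ) := Int.natCast_nonneg h
  have h3 : -(N:ℤ) ≤ b := by omega
  have h4 : b ≤ (N:ℤ) := by omega
  have h3' : -(N:ℤ) ≤ b - h := by omega
  have h4' : b - (h:ℤ) ≤ N := by omega
  rw [hm]
  exact wsumf_swap hb hbh h3' h4' h3 h4 φ

lemma removeHook_ccnt {s : ℕ} {l m : SeqPartition} (hr : SeqPartition.RemoveHook s l m) :
    ∀ᶠ N in Filter.atTop, ∀ c : ℤ,
      wsumf m.betaSet N (ind s c) = wsumf l.betaSet N (ind s c) := by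
  obtain ⟨b, hev⟩ := removeHook_wsumf hr
  filter_upwards [hev] with N hN c
  rw [hN (ind s c)]
  have : ind s c (b - s) = ind s c b := by
    unfold ind
    congr 1
    simp only [eq_iff_iff]
    apply dvd_sub_congr
    have : b - (s:ℤ) - b = -s := by ring
    rw [this]
    exact dvd_neg.2 dvd_rfl
  rw [this]
  ring

lemma removeHook_size {h : ℕ} {l m : SeqPartition} (hr : SeqPartition.RemoveHook h l m) :
    (m.size : ℤ) = (l.size : ℤ) - h := by
  obtain ⟨b, hev⟩ := removeHook_wsumf hr
  rw [Filter.eventually_atTop] at hev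
  obtain ⟨N₀, hN₀⟩ := hev
  set N := max N₀ (max (pM l) (pM m)) with hNdef
  have h1 := hN₀ N (le_max_left _ _) id
  rw [wsum_betaSet (le_trans (le_max_left _ _) (le_max_right _ _)),
    wsum_betaSet (le_trans (le_max_right _ _) (le_max_right _ _))] at h1
  simp only [id_eq] at h1
  omega

def DownClosed (s : ℕ) (S : Set ℤ) : Prop := ∀ x ∈ S, x - (s:ℤ) ∈ S

lemma downClosed_chain {s : ℕ} {S : Set ℤ} (hD : DownClosed s S) {x : ℤ} (hx : x ∈ S) :
    ∀ k : ℕ, x - (s:ℤ) * k ∈ S := by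
  intro k
  induction k with
  | zero => simpa using hx
  | succ k ih =>
    have heq : x - (s:ℤ) * ((k+1 : ℕ) : ℤ) = (x - (s:ℤ) * k) - s := by push_cast; ring
    rw [heq]
    exact hD _ ih

lemma exists_removeHook {s : ℕ} (hs : 0 < s) {l : SeqPartition} {b : ℤ}
    (hb : b ∈ l.betaSet) (hbs : b - (s:ℤ) ∉ l.betaSet) :
    ∃ m, SeqPartition.RemoveHook s l m := by
  set S' : Set ℤ := insert (b - (s:ℤ)) (l.betaSet \ {b}) with hS'
  have hAdm := adm_betaSet l
  have hbub : b ≤ (pM l : ℤ) := hAdm.2 b hb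
  have hblb : -(pM l : ℤ) ≤ b - s := by
    by_contra hc
    push_neg at hc
    exact hbs (hAdm.1 _ hc)
  have hAdm' : Adm S' (pM l + s) := by
    constructor
    · intro x hx
      have hx1 : x < -(pM l : ℤ) := by push_cast at hx ⊢; omega
      have hx2 : x ∈ l.betaSet := hAdm.1 _ hx1
      have hxb : x ≠ b := by
        intro hceq
        subst hceq
        push_cast at hx
        omega
      exact Or.inr ⟨hx2, hxb⟩
    · intro x hx
      rcases hx with rfl | ⟨hx1, _⟩
      · push_cast
        have : (0:ℤ) ≤ s := Int.natCast_nonneg s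
        omega
      · have := hAdm.2 x hx1
        push_cast
        omega
  -- pick a big window
  set N := pM l + s + 1 + b.natAbs with hNdef
  have hb3 : -(N:ℤ) ≤ b - s ∧ b ≤ (N:ℤ) := by
    have h1 : |b| ≤ (b.natAbs : ℤ) := le_of_eq (Int.abs_eq_natAbs b)
    have h2 := neg_abs_le b
    have h3 := le_abs_self b
    have : (0:ℤ) ≤ s := Int.natCast_nonneg s
    constructor <;> [skip; skip] <;> push_cast <;> omega
  have hcard : wsumf S' N (fun _ => 1) = (N:ℤ) := by
    rw [hS', wsumf_swap hb hbs hb3.1 (by have := hb3.2; have : (0:ℤ) ≤ s := Int.natCast_nonneg s; omega)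
      (by have := hb3.1; have : (0:ℤ) ≤ s := Int.natCast_nonneg s; omega) hb3.2]
    rw [card_win_betaSet (by omega)]
    ring
  obtain ⟨m, hmβ⟩ := exists_partition hAdm' (by omega) hcard
  exact ⟨m, b, hb, hbs, by rw [hmβ]⟩

lemma isCore_iff_downClosed {s : ℕ} (hs : 0 < s) (l : SeqPartition) :
    SeqPartition.IsCore s l ↔ DownClosed s l.betaSet := by
  constructor
  · intro hc
    intro x hx
    by_contra hxs
    obtain ⟨m, hm⟩ := exists_removeHook hs hx hxs
    exact hc m hm
  · rintro hD m ⟨b, hb, hbs, _⟩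
    exact hbs (hD b hb)

lemma ccnt_card {S : Set ℤ} {N : ℕ} {s : ℕ} {c : ℤ} :
    wsumf S N (ind s c) = (((win S N).filter (fun y => (s:ℤ) ∣ y - c)).card : ℤ) := by
  unfold wsumf ind
  rw [Finset.sum_ite, Finset.sum_const, Finset.sum_const]
  simp

lemma downClosed_subset {s : ℕ} (hs : 0 < s) {S T : Set ℤ} {MS MT : ℕ}
    (hDS : DownClosed s S) (hDT : DownClosed s T) (hAS : Adm S MS) (hAT : Adm T MT)
    (hev : ∀ᶠ N in Filter.atTop, ∀ c : ℤ, wsumf S N (ind s c) = wsumf T N (ind s c)) :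
    S ⊆ T := by
  intro x hxS
  by_contra hxT
  rw [Filter.eventually_atTop] at hev
  obtain ⟨N₀, hN₀⟩ := hev
  set N := max N₀ (max x.natAbs (max MS MT)) with hNdef
  have hxN : -(N:ℤ) ≤ x ∧ x ≤ (N:ℤ) := by
    have h1 : (x.natAbs : ℤ) ≤ N := by
      exact_mod_cast le_trans (le_max_left _ _) (le_max_right _ _)
    have h2 := neg_abs_le x
    have h3 := le_abs_self x
    rw [Int.abs_eq_natAbs] at h2 h3
    constructor <;> omega
  have hsub : ((win T N).filter (fun y => (s:ℤ) ∣ y - x)) ⊆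
      ((win S N).filter (fun y => (s:ℤ) ∣ y - x)) := by
    intro y hy
    rw [Finset.mem_filter, mem_win] at hy ⊢
    obtain ⟨⟨hIcc, hyT⟩, hdvd⟩ := hy
    refine ⟨⟨hIcc, ?_⟩, hdvd⟩
    -- y ∈ T, y ≡ x (mod s); show y ∈ S
    obtain ⟨d, hd⟩ := hdvd
    rcases le_or_gt y x with hyx | hyx
    · -- y = x - s * k, chain from x in S
      have hd0 : d ≤ 0 := by
        by_contra hdp
        push_neg at hdp
        have : (0:ℤ) < s * d := mul_pos (by exact_mod_cast hs) hdp
        omega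
      have hkey := downClosed_chain hDS hxS (-d).toNat
      have hcast : ((-d).toNat : ℤ) = -d := Int.toNat_of_nonneg (by omega)
      have : x - (s:ℤ) * ((-d).toNat : ℤ) = y := by rw [hcast, mul_neg]; omega
      rwa [this] at hkey
    · -- x = y - s*k ∈ T, contradiction
      exfalso
      have hd0 : 0 ≤ d := by
        by_contra hdp
        push_neg at hdp
        have : s * d < 0 := mul_neg_of_pos_of_neg (by exact_mod_cast hs) hdp
        omega
      have hkey := downClosed_chain hDT hyT d.toNat
      have hcast : (d.toNat : ℤ) = d := Int.toNat_of_nonneg hd0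
      have : y - (s:ℤ) * (d.toNat : ℤ) = x := by rw [hcast]; omega
      rw [this] at hkey
      exact hxT hkey
  have hssub : ((win T N).filter (fun y => (s:ℤ) ∣ y - x)) ⊂
      ((win S N).filter (fun y => (s:ℤ) ∣ y - x)) := by
    refine ⟨hsub, ?_⟩
    intro hcon
    have hxin : x ∈ (win S N).filter (fun y => (s:ℤ) ∣ y - x) := by
      rw [Finset.mem_filter, mem_win]
      exact ⟨⟨hxN, hxS⟩, by simp⟩
    have := hcon hxin
    rw [Finset.mem_filter, mem_win] at this
    exact hxT this.1.2
  have hlt := Finset.card_lt_card hssub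
  have heq := hN₀ N (le_max_left _ _) x
  rw [ccnt_card, ccnt_card] at heq
  omega

lemma downClosed_eq {s : ℕ} (hs : 0 < s) {S T : Set ℤ} {MS MT : ℕ}
    (hDS : DownClosed s S) (hDT : DownClosed s T) (hAS : Adm S MS) (hAT : Adm T MT)
    (hev : ∀ᶠ N in Filter.atTop, ∀ c : ℤ, wsumf S N (ind s c) = wsumf T N (ind s c)) :
    S = T := by
  apply Set.Subset.antisymm
  · exact downClosed_subset hs hDS hDT hAS hAT hev
  · exact downClosed_subset hs hDT hDS hAT hAS (hev.mono (fun N hN c => (hN c).symm))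

lemma exists_hasCore {s : ℕ} (hs : 0 < s) (l : SeqPartition) :
    ∃ c, SeqPartition.HasCore s l c := by
  generalize hn : l.size = n
  induction n using Nat.strong_induction_on generalizing l with
  | _ n ih =>
    by_cases hcore : SeqPartition.IsCore s l
    · exact ⟨l, Relation.ReflTransGen.refl, hcore⟩
    · have hnd : ¬ DownClosed s l.betaSet := fun hD => hcore ((isCore_iff_downClosed hs l).2 hD)
      unfold DownClosed at hnd
      push_neg at hnd
      obtain ⟨b, hb, hbs⟩ := hnd
      obtain ⟨m, hm⟩ := exists_removeHook hs hb hbs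
      have hsize := removeHook_size hm
      have hlt : m.size < n := by omega
      obtain ⟨c, hc1, hc2⟩ := ih m.size hlt m rfl
      exact ⟨c, Relation.ReflTransGen.head hm hc1, hc2⟩

lemma hasCore_ccnt {s : ℕ} {l c : SeqPartition} (h : SeqPartition.HasCore s l c) :
    ∀ᶠ N in Filter.atTop, ∀ cc : ℤ,
      wsumf c.betaSet N (ind s cc) = wsumf l.betaSet N (ind s cc) := by
  obtain ⟨hchain, -⟩ := h
  induction hchain with
  | refl => exact Filter.Eventually.of_forall (fun N cc => rfl)
  | tail hstep hlast ih =>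
    have h2 := removeHook_ccnt hlast
    filter_upwards [ih, h2] with N h1 h2' cc
    rw [h2' cc, h1 cc]

lemma hasCore_of_ccnt {s : ℕ} (hs : 0 < s) {l σ : SeqPartition} (hσ : SeqPartition.IsCore s σ)
    (hev : ∀ᶠ N in Filter.atTop, ∀ cc : ℤ,
      wsumf σ.betaSet N (ind s cc) = wsumf l.betaSet N (ind s cc)) :
    SeqPartition.HasCore s l σ := by
  obtain ⟨c₀, hc₀⟩ := exists_hasCore hs l
  have hev₀ := hasCore_ccnt hc₀
  have hβ : σ.betaSet = c₀.betaSet := by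
    apply downClosed_eq hs ((isCore_iff_downClosed hs σ).1 hσ)
      ((isCore_iff_downClosed hs c₀).1 hc₀.2) (adm_betaSet σ) (adm_betaSet c₀)
    filter_upwards [hev, hev₀] with N h1 h2 cc
    rw [h1 cc, h2 cc]
  have : σ = c₀ := partition_ext hβ
  rw [this]
  exact hc₀

lemma hasCore_unique {s : ℕ} (hs : 0 < s) {l c₁ c₂ : SeqPartition}
    (h1 : SeqPartition.HasCore s l c₁) (h2 : SeqPartition.HasCore s l c₂) : c₁ = c₂ := by
  apply partition_ext
  apply downClosed_eq hs ((isCore_iff_downClosed hs c₁).1 h1.2)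
    ((isCore_iff_downClosed hs c₂).1 h2.2) (adm_betaSet c₁) (adm_betaSet c₂)
  filter_upwards [hasCore_ccnt h1, hasCore_ccnt h2] with N ha hb cc
  rw [ha cc, hb cc]

end StProof
namespace StProof

lemma exists_image_partition {s t : ℕ} {u v : ℤ → ℤ} (Gu : GoodMap s t u) (Gv : GoodMap t s v)
    (l : SeqPartition) : ∃ l' : SeqPartition, l'.betaSet = u '' (v '' l.betaSet) := by
  obtain ⟨ubij, ⟨Cu, hCu⟩, utdvd, ushift, upres, urel⟩ := Gu
  obtain ⟨vbij, ⟨Cv, hCv⟩, vsdvd, vshift, vpres, vrel⟩ := Gv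
  have hAl := adm_betaSet l
  have hAvl : Adm (v '' l.betaSet) (pM l + Cv) := Adm_image vbij hCv hAl
  have hAuvl : Adm (u '' (v '' l.betaSet)) (pM l + Cv + Cu) := Adm_image ubij hCu hAvl
  have hc1 : ∀ᶠ N in Filter.atTop, wsumf l.betaSet N (fun _ => 1) = (N:ℤ) := by
    rw [Filter.eventually_atTop]
    exact ⟨pM l, fun N hN => card_win_betaSet hN⟩
  have hc2 := (vpres l.betaSet (pM l) hAl).mono (fun N hN => hN.2)
  have hc3 := (upres (v '' l.betaSet) (pM l + Cv) hAvl).mono (fun N hN => hN.2)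
  have hcall : ∀ᶠ N in Filter.atTop, wsumf (u '' (v '' l.betaSet)) N (fun _ => 1) = (N:ℤ) := by
    filter_upwards [hc1, hc2, hc3] with N h1 h2 h3
    rw [h3, h2, h1]
  obtain ⟨N, hN1, hN2⟩ := (hcall.and (Filter.eventually_ge_atTop (pM l + Cv + Cu + 1))).exists
  exact exists_partition hAuvl hN2 hN1

lemma transfer {s t : ℕ} {u v : ℤ → ℤ} (hs : 1 < s) (ht : 1 < t)
    (Gu : GoodMap s t u) (Gv : GoodMap t s v)
    {l l' σ τ σ' τ' : SeqPartition}
    (hσ : SeqPartition.HasCore s l σ) (hτ : SeqPartition.HasCore t l τ)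
    (hl' : l'.betaSet = u '' (v '' l.betaSet))
    (hσ' : σ'.betaSet = u '' σ.betaSet) (hτ' : τ'.betaSet = v '' τ.betaSet) :
    SeqPartition.HasCore s l' σ' ∧ SeqPartition.HasCore t l' τ' ∧
      (l'.size : ℤ) - l.size = ((σ'.size : ℤ) - σ.size) + ((τ'.size : ℤ) - τ.size) := by
  have hs0 : 0 < s := by omega
  have ht0 : 0 < t := by omega
  obtain ⟨ubij, ⟨Cu, hCu⟩, utdvd, ushift, upres, urel⟩ := Gu
  obtain ⟨vbij, ⟨Cv, hCv⟩, vsdvd, vshift, vpres, vrel⟩ := Gv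
  have hAl := adm_betaSet l
  have hAσ := adm_betaSet σ
  have hAτ := adm_betaSet τ
  have hAvl : Adm (v '' l.betaSet) (pM l + Cv) := Adm_image vbij hCv hAl
  -- s-side charge chain
  have E1 := hasCore_ccnt hσ
  have E2 := (vpres l.betaSet (pM l) hAl).mono (fun N hN => hN.1)
  have E3 : ∀ᶠ N in Filter.atTop, ∀ c : ℤ,
      wsumf σ.betaSet N (ind s c) = wsumf (v '' l.betaSet) N (ind s c) := by
    filter_upwards [E1, E2] with N h1 h2 c
    rw [h1 c, h2 c]
  have E4 := urel σ.betaSet (v '' l.betaSet) (pM σ) (pM l + Cv) hAσ hAvl E3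
  -- t-side charge chain
  have F1 := hasCore_ccnt hτ
  have F2 := vrel τ.betaSet l.betaSet (pM τ) (pM l) hAτ hAl F1
  have F3 := (upres (v '' l.betaSet) (pM l + Cv) hAvl).mono (fun N hN => hN.1)
  -- down-closedness of the images
  have hDCσ' : DownClosed s σ'.betaSet := by
    rw [hσ']
    rintro x ⟨y, hy, rfl⟩
    have hDCσ := (isCore_iff_downClosed hs0 σ).1 hσ.2
    refine ⟨y - s, hDCσ y hy, ?_⟩
    have h1 := ushift (y - (s:ℤ))
    have h2 : y - (s:ℤ) + s = y := by ring
    rw [h2] at h1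
    omega
  have hDCτ' : DownClosed t τ'.betaSet := by
    rw [hτ']
    rintro x ⟨y, hy, rfl⟩
    have hDCτ := (isCore_iff_downClosed ht0 τ).1 hτ.2
    refine ⟨y - t, hDCτ y hy, ?_⟩
    have h1 := vshift (y - (t:ℤ))
    have h2 : y - (t:ℤ) + t = y := by ring
    rw [h2] at h1
    omega
  have hCore1 : SeqPartition.HasCore s l' σ' := by
    apply hasCore_of_ccnt hs0 ((isCore_iff_downClosed hs0 σ').2 hDCσ')
    filter_upwards [E4] with N h4 cc
    rw [hσ', hl']
    exact h4.1 cc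
  have hCore2 : SeqPartition.HasCore t l' τ' := by
    apply hasCore_of_ccnt ht0 ((isCore_iff_downClosed ht0 τ').2 hDCτ')
    filter_upwards [F2, F3] with N h2 h3 cc
    rw [hτ', hl', h3 cc]
    exact h2.1 cc
  refine ⟨hCore1, hCore2, ?_⟩
  -- size computation
  have K := max (pM l) (max (pM l') (max (pM σ) (max (pM σ') (max (pM τ) (pM τ')))))
  obtain ⟨N, hN, hNK⟩ := ((E4.and F2).and (Filter.eventually_ge_atTop
    (max (pM l) (max (pM l') (max (pM σ) (max (pM σ') (max (pM τ) (pM τ')))))))).exists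
  obtain ⟨⟨-, h4⟩, ⟨-, h2⟩⟩ := hN
  -- h4 : wsumf (u''σ) id - wsumf σ id = wsumf (u''(v''l)) id - wsumf (v''l) id
  -- h2 : wsumf (v''τ) id - wsumf τ id = wsumf (v''l) id - wsumf l id
  rw [← hσ', ← hl'] at h4
  rw [← hτ'] at h2
  have w1 : wsumf l.betaSet N id = (l.size : ℤ) - TT N := wsum_betaSet (by omega)
  have w2 : wsumf l'.betaSet N id = (l'.size : ℤ) - TT N := wsum_betaSet (by omega)
  have w3 : wsumf σ.betaSet N id = (σ.size : ℤ) - TT N := wsum_betaSet (by omega)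
  have w4 : wsumf σ'.betaSet N id = (σ'.size : ℤ) - TT N := wsum_betaSet (by omega)
  have w5 : wsumf τ.betaSet N id = (τ.size : ℤ) - TT N := wsum_betaSet (by omega)
  have w6 : wsumf τ'.betaSet N id = (τ'.size : ℤ) - TT N := wsum_betaSet (by omega)
  rw [w2, w3, w4] at h4
  rw [w1, w5, w6] at h2
  omega

end StProof
open StProof

/-- the set of `(s,t)`-minimal partitions is preserved by the
action of `W_s × W_t`, and `m_{uσ,vτ} = m_{σ,τ} − |σ| − |τ| + |uσ| + |vτ|`. -/
theorem stmt19 (s t : ℕ) (hs : 1 < s) (ht : 1 < t) (hst : Nat.Coprime s t)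
    (u v : Function.End ℤ) (hu : u ∈ WMon s t) (hv : v ∈ WMon t s) :
    (∀ l m : SeqPartition, m.betaSet = (fun b => u (v b)) '' l.betaSet →
      MinimalPart s t l → MinimalPart s t m) ∧
    (∀ σ τ σ' τ' : SeqPartition,
      SeqPartition.IsCore s σ → SeqPartition.IsCore t τ →
      σ'.betaSet = (fun b => u b) '' σ.betaSet →
      τ'.betaSet = (fun b => v b) '' τ.betaSet →
      ∀ m m' : ℕ,
      ((∃ l : SeqPartition, l.size = m ∧ SeqPartition.HasCore s l σ ∧ SeqPartition.HasCore t l τ) ∧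
        ∀ l : SeqPartition, SeqPartition.HasCore s l σ → SeqPartition.HasCore t l τ → m ≤ l.size) →
      ((∃ l : SeqPartition, l.size = m' ∧ SeqPartition.HasCore s l σ' ∧ SeqPartition.HasCore t l τ') ∧
        ∀ l : SeqPartition, SeqPartition.HasCore s l σ' → SeqPartition.HasCore t l τ' → m' ≤ l.size) →
      (m' : ℤ) = (m : ℤ) - σ.size - τ.size + σ'.size + τ'.size) := by
  have hs0 : 0 < s := by omega
  have ht0 : 0 < t := by omega
  have hsdt : ¬ (s:ℤ) ∣ (t:ℤ) := by
    intro h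
    have h' : s ∣ t := Int.ofNat_dvd.mp h
    have h2 := Nat.dvd_gcd (dvd_refl s) h'
    rw [Nat.Coprime] at hst
    rw [hst] at h2
    have h3 := Nat.eq_one_of_dvd_one h2
    omega
  have htds : ¬ (t:ℤ) ∣ (s:ℤ) := by
    intro h
    have h' : t ∣ s := Int.ofNat_dvd.mp h
    have h2 := Nat.dvd_gcd h' (dvd_refl t)
    rw [Nat.Coprime] at hst
    rw [hst] at h2
    have h3 := Nat.eq_one_of_dvd_one h2
    omega
  have Gu : GoodMap s t u := goodMap_of_mem hsdt hu
  have Gv : GoodMap t s v := goodMap_of_mem htds hv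
  obtain ⟨u', hu'mem, hu'1, hu'2⟩ := exists_inverse hsdt hu
  obtain ⟨v', hv'mem, hv'1, hv'2⟩ := exists_inverse htds hv
  have Gu' : GoodMap s t u' := goodMap_of_mem hsdt hu'mem
  have Gv' : GoodMap t s v' := goodMap_of_mem htds hv'mem
  have himg : ∀ {f g : ℤ → ℤ}, (∀ n, g (f n) = n) → ∀ S : Set ℤ, g '' (f '' S) = S := by
    intro f g hfg S
    rw [Set.image_image]
    have : (fun x => g (f x)) = id := funext hfg
    rw [this, Set.image_id]
  have hcomp : ∀ (f g : ℤ → ℤ) (S : Set ℤ), (fun b => f (g b)) '' S = f '' (g '' S) := by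
    intro f g S
    rw [Set.image_image]
  constructor
  · -- preservation of minimality
    intro l m hβ hmin
    intro m₂ σ₂ τ₂ h1 h2 h3 h4
    obtain ⟨σ, hσ⟩ := exists_hasCore hs0 l
    obtain ⟨τ, hτ⟩ := exists_hasCore ht0 l
    obtain ⟨σ', hσ'β⟩ := exists_image_partition Gu (goodMap_one t s) σ
    obtain ⟨τ', hτ'β⟩ := exists_image_partition (goodMap_one s t) Gv τ
    have hσ'β' : σ'.betaSet = u '' σ.betaSet := by
      rw [hσ'β, Set.image_id']
    have hτ'β' : τ'.betaSet = v '' τ.betaSet := by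
      rw [hτ'β, Set.image_id']
    have hβ' : m.betaSet = u '' (v '' l.betaSet) := by rw [hβ]; exact hcomp u v l.betaSet
    have T := transfer hs ht Gu Gv hσ hτ hβ' hσ'β' hτ'β'
    have hσeq : σ₂ = σ' := hasCore_unique hs0 h1 T.1
    have hτeq : τ₂ = τ' := hasCore_unique ht0 h2 T.2.1
    subst hσeq
    subst hτeq
    obtain ⟨l₂, hl₂β⟩ := exists_image_partition Gu' Gv' m₂
    have hσback : σ.betaSet = u' '' σ₂.betaSet := by
      rw [hσ'β']
      exact (himg hu'1 σ.betaSet).symm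
    have hτback : τ.betaSet = v' '' τ₂.betaSet := by
      rw [hτ'β']
      exact (himg hv'1 τ.betaSet).symm
    have T2 := transfer hs ht Gu' Gv' h3 h4 hl₂β hσback hτback
    have hll₂ : l.size ≤ l₂.size := hmin l₂ σ τ hσ hτ T2.1 T2.2.1
    have e1 := T.2.2
    have e2 := T2.2.2
    have hcast : (l.size:ℤ) ≤ (l₂.size:ℤ) := by exact_mod_cast hll₂
    have : (m.size:ℤ) ≤ (m₂.size:ℤ) := by omega
    exact_mod_cast this
  · -- the minimal sizes
    intro σ τ σ' τ' hσcore hτcore hσ'β hτ'β m m' Hm Hm'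
    obtain ⟨⟨l₀, hl₀sz, hl₀σ, hl₀τ⟩, hmin⟩ := Hm
    obtain ⟨⟨l₁, hl₁sz, hl₁σ, hl₁τ⟩, hmin'⟩ := Hm'
    have hσ'β' : σ'.betaSet = u '' σ.betaSet := hσ'β
    have hτ'β' : τ'.betaSet = v '' τ.betaSet := hτ'β
    obtain ⟨l₀', hl₀'β⟩ := exists_image_partition Gu Gv l₀
    have T := transfer hs ht Gu Gv hl₀σ hl₀τ hl₀'β hσ'β' hτ'β'
    have hm'le : m' ≤ l₀'.size := hmin' l₀' T.1 T.2.1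
    obtain ⟨l₁', hl₁'β⟩ := exists_image_partition Gu' Gv' l₁
    have hσback : σ.betaSet = u' '' σ'.betaSet := by
      rw [hσ'β']
      exact (himg hu'1 σ.betaSet).symm
    have hτback : τ.betaSet = v' '' τ'.betaSet := by
      rw [hτ'β']
      exact (himg hv'1 τ.betaSet).symm
    have T2 := transfer hs ht Gu' Gv' hl₁σ hl₁τ hl₁'β hσback hτback
    have hmle : m ≤ l₁'.size := hmin l₁' T2.1 T2.2.1
    have e1 := T.2.2
    have e2 := T2.2.2
    have c1 : (m':ℤ) ≤ (l₀'.size:ℤ) := by exact_mod_cast hm'le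
    have c2 : (m:ℤ) ≤ (l₁'.size:ℤ) := by exact_mod_cast hmle
    have c3 : (l₀.size:ℤ) = m := by exact_mod_cast hl₀sz
    have c4 : (l₁.size:ℤ) = m' := by exact_mod_cast hl₁sz
    omega
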